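/- Brezis–Lieb type splitting: let 1 < q₁ ≤ q₂ < ∞, let R : ℝ → ℝ be of class C¹ with |R'(s)| ≤ b₁|s|^{q₁−1} + b₂|s|^{q₂−1} for some b₁,b₂ > 0, and set T̃(u) = ∫_{ℝ^N} R(u) dx. If {u_n} is a sequence bounded in L^{q₁}(ℝ^N) ∩ L^{q₂}(ℝ^N) and u_n → u almost everywhere, then T̃(u_n − u) + T̃(u) = T̃(u_n) + o(1) as n → ∞. -/

import Mathlib

open MeasureTheory Filter Topology ENNReal

noncomputable section


/-- `x^(q-1) * x = x^q` for `x ≥ 0`, `q > 0` (rpow). -/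
lemma BLaux_rpow_sub_one_mul {x : ℝ} (hx : 0 ≤ x) {q : ℝ} (hq : 0 < q) :
    x ^ (q - 1) * x = x ^ q := by
  rcases eq_or_lt_of_le hx with h | h
  · rw [← h, Real.zero_rpow hq.ne', mul_zero]
  · nth_rewrite 2 [← Real.rpow_one x]
    rw [← Real.rpow_add h]
    ring_nf

/-- Mean value bound for `R`. -/
lemma BLaux_mvt {q₁ q₂ b₁ b₂ : ℝ} (hq₁ : 1 < q₁) (hq₁₂ : q₁ ≤ q₂)
    (hb₁ : 0 ≤ b₁) (hb₂ : 0 ≤ b₂)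
    {R : ℝ → ℝ} (hR : ContDiff ℝ 1 R)
    (hR' : ∀ s : ℝ, |deriv R s| ≤ b₁ * |s| ^ (q₁ - 1) + b₂ * |s| ^ (q₂ - 1))
    (a b : ℝ) :
    |R (a + b) - R a| ≤ (b₁ * (|a| + |b|) ^ (q₁ - 1) + b₂ * (|a| + |b|) ^ (q₂ - 1)) * |b| := by
  set M := |a| + |b| with hM
  have hM0 : 0 ≤ M := by positivity
  have hconv : Convex ℝ (Set.Icc (-M) M) := convex_Icc _ _
  have hmem : ∀ x : ℝ, |x| ≤ M → x ∈ Set.Icc (-M) M := fun x hx => abs_le.mp hx |>.imp id id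
  have ha : a ∈ Set.Icc (-M) M := hmem a (by rw [hM]; nlinarith [abs_nonneg b])
  have hab : a + b ∈ Set.Icc (-M) M := hmem _ ((abs_add_le a b).trans le_rfl)
  have hbound : ∀ x ∈ Set.Icc (-M) M, ‖deriv R x‖ ≤
      b₁ * M ^ (q₁ - 1) + b₂ * M ^ (q₂ - 1) := by
    intro x hx
    have hxM : |x| ≤ M := abs_le.mpr ⟨hx.1, hx.2⟩
    refine (hR' x).trans ?_
    gcongr <;> first | exact hxM | linarith
  have := hconv.norm_image_sub_le_of_norm_deriv_le
    (fun x _ => (hR.differentiable one_ne_zero).differentiableAt) hbound ha hab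
  simpa [Real.norm_eq_abs, add_sub_cancel_left] using this

/-- Growth bound: `|R s - R 0| ≤ b₁|s|^{q₁} + b₂|s|^{q₂}`. -/
lemma BLaux_growth {q₁ q₂ b₁ b₂ : ℝ} (hq₁ : 1 < q₁) (hq₁₂ : q₁ ≤ q₂)
    (hb₁ : 0 ≤ b₁) (hb₂ : 0 ≤ b₂)
    {R : ℝ → ℝ} (hR : ContDiff ℝ 1 R)
    (hR' : ∀ s : ℝ, |deriv R s| ≤ b₁ * |s| ^ (q₁ - 1) + b₂ * |s| ^ (q₂ - 1))
    (s : ℝ) : |R s - R 0| ≤ b₁ * |s| ^ q₁ + b₂ * |s| ^ q₂ := by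
  have h := BLaux_mvt hq₁ hq₁₂ hb₁ hb₂ hR hR' 0 s
  simp only [zero_add, abs_zero] at h
  calc |R s - R 0| ≤ (b₁ * |s| ^ (q₁ - 1) + b₂ * |s| ^ (q₂ - 1)) * |s| := h
    _ = b₁ * (|s| ^ (q₁ - 1) * |s|) + b₂ * (|s| ^ (q₂ - 1) * |s|) := by ring
    _ = b₁ * |s| ^ q₁ + b₂ * |s| ^ q₂ := by
        rw [BLaux_rpow_sub_one_mul (abs_nonneg s) (by linarith),
          BLaux_rpow_sub_one_mul (abs_nonneg s) (by linarith)]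

set_option maxHeartbeats 1000000 in
/-- The Brezis–Lieb ε-estimate. -/
lemma BLaux_eps {q₁ q₂ b₁ b₂ : ℝ} (hq₁ : 1 < q₁) (hq₁₂ : q₁ ≤ q₂)
    (hb₁ : 0 < b₁) (hb₂ : 0 < b₂)
    {R : ℝ → ℝ} (hR : ContDiff ℝ 1 R)
    (hR' : ∀ s : ℝ, |deriv R s| ≤ b₁ * |s| ^ (q₁ - 1) + b₂ * |s| ^ (q₂ - 1))
    (hR0 : R 0 = 0) {ε : ℝ} (hε : 0 < ε) :
    ∃ K : ℝ, 0 ≤ K ∧ ∀ a b : ℝ,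
      |R (a + b) - R a - R b| ≤ ε * (|a| ^ q₁ + |a| ^ q₂) + K * (|b| ^ q₁ + |b| ^ q₂) := by
  have hq₂ : 1 < q₂ := lt_of_lt_of_le hq₁ hq₁₂
  have htwo : (0:ℝ) < 2 ^ q₂ := Real.rpow_pos_of_pos two_pos q₂
  obtain ⟨η, hη0, hη1, hηD⟩ :
      ∃ η : ℝ, 0 < η ∧ η ≤ 1 ∧ η * ((2:ℝ) ^ q₂ * (b₁ + b₂)) ≤ ε := by
    have hD0 : (0:ℝ) < 2 ^ q₂ * (b₁ + b₂) := by positivity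
    refine ⟨min 1 (ε / (2 ^ q₂ * (b₁ + b₂) + 1)), lt_min one_pos (by positivity),
      min_le_left _ _, ?_⟩
    have h1 : min 1 (ε / (2 ^ q₂ * (b₁ + b₂) + 1)) ≤ ε / (2 ^ q₂ * (b₁ + b₂) + 1) :=
      min_le_right _ _
    have h0 : (0:ℝ) < min 1 (ε / (2 ^ q₂ * (b₁ + b₂) + 1)) := lt_min one_pos (by positivity)
    have h2 : min 1 (ε / (2 ^ q₂ * (b₁ + b₂) + 1)) * (2 ^ q₂ * (b₁ + b₂) + 1) ≤ ε := by
      calc min 1 (ε / (2 ^ q₂ * (b₁ + b₂) + 1)) * (2 ^ q₂ * (b₁ + b₂) + 1)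
          ≤ (ε / (2 ^ q₂ * (b₁ + b₂) + 1)) * (2 ^ q₂ * (b₁ + b₂) + 1) :=
            mul_le_mul_of_nonneg_right h1 (by linarith)
        _ = ε := div_mul_cancel₀ _ (by linarith)
    nlinarith
  obtain ⟨Kb, hKb1, hKbη⟩ : ∃ Kb : ℝ, 1 ≤ Kb ∧ 1 + 1 / η ≤ Kb := by
    refine ⟨1 + 1 / η, ?_, le_rfl⟩
    have : (0:ℝ) < 1 / η := by positivity
    linarith
  have hKb0 : (0:ℝ) < Kb := by linarith
  have hKb_pow1 : (1:ℝ) ≤ Kb ^ q₁ := Real.one_le_rpow hKb1 (by linarith)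
  have hKb_pow2 : (1:ℝ) ≤ Kb ^ q₂ := Real.one_le_rpow hKb1 (by linarith)
  have hηinv : 1 / η ≤ Kb := by
    have : (0:ℝ) ≤ 1 := one_pos.le
    linarith
  have hg : ∀ s : ℝ, |R s| ≤ b₁ * |s| ^ q₁ + b₂ * |s| ^ q₂ := by
    intro s
    simpa [hR0] using BLaux_growth hq₁ hq₁₂ hb₁.le hb₂.le hR hR' s
  have p1 : (0:ℝ) ≤ b₁ * Kb ^ q₁ := mul_nonneg hb₁.le (by linarith)
  have p2 : (0:ℝ) ≤ b₂ * Kb ^ q₂ := mul_nonneg hb₂.le (by linarith)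
  refine ⟨3 * (b₁ * Kb ^ q₁ + b₂ * Kb ^ q₂) + b₁ + b₂, by linarith, fun a b => ?_⟩
  set K : ℝ := 3 * (b₁ * Kb ^ q₁ + b₂ * Kb ^ q₂) + b₁ + b₂ with hKdef
  clear_value K
  have hK0 : 0 ≤ K := by rw [hKdef]; linarith
  have hA1 : (0:ℝ) ≤ |a| ^ q₁ := Real.rpow_nonneg (abs_nonneg a) _
  have hA2 : (0:ℝ) ≤ |a| ^ q₂ := Real.rpow_nonneg (abs_nonneg a) _
  have hB1 : (0:ℝ) ≤ |b| ^ q₁ := Real.rpow_nonneg (abs_nonneg b) _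
  have hB2 : (0:ℝ) ≤ |b| ^ q₂ := Real.rpow_nonneg (abs_nonneg b) _
  by_cases hcase : |b| ≤ η * |a|
  · -- |b| small compared to |a|
    by_cases ha0 : a = 0
    · have hb0 : b = 0 := by
        rw [ha0] at hcase; simp at hcase
        exact abs_eq_zero.mp (le_antisymm (by simpa using hcase) (abs_nonneg b))
      rw [ha0, hb0]
      simp only [add_zero, sub_self, hR0, abs_zero, sub_zero, zero_sub, abs_neg]
      positivity
    · have ha : 0 < |a| := abs_pos.mpr ha0
      have h1 := BLaux_mvt hq₁ hq₁₂ hb₁.le hb₂.le hR hR' a b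
      have hab2 : |a| + |b| ≤ 2 * |a| := by nlinarith
      have hmono : ∀ q : ℝ, 1 < q → q ≤ q₂ →
          (|a| + |b|) ^ (q - 1) ≤ 2 ^ q₂ * |a| ^ (q - 1) := by
        intro q hq hqle
        calc (|a| + |b|) ^ (q - 1) ≤ (2 * |a|) ^ (q - 1) :=
              Real.rpow_le_rpow (by positivity) hab2 (by linarith)
          _ = 2 ^ (q - 1) * |a| ^ (q - 1) :=
              Real.mul_rpow (by norm_num) (abs_nonneg a)
          _ ≤ 2 ^ q₂ * |a| ^ (q - 1) :=
              mul_le_mul_of_nonneg_right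
                (Real.rpow_le_rpow_of_exponent_le one_le_two (by linarith))
                (Real.rpow_nonneg (abs_nonneg a) _)
      have h1' : |R (a + b) - R a| ≤ η * 2 ^ q₂ * (b₁ * |a| ^ q₁ + b₂ * |a| ^ q₂) := by
        have hXY : b₁ * (|a| + |b|) ^ (q₁ - 1) + b₂ * (|a| + |b|) ^ (q₂ - 1)
            ≤ b₁ * (2 ^ q₂ * |a| ^ (q₁ - 1)) + b₂ * (2 ^ q₂ * |a| ^ (q₂ - 1)) :=
          add_le_add (mul_le_mul_of_nonneg_left (hmono q₁ hq₁ hq₁₂) hb₁.le)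
            (mul_le_mul_of_nonneg_left (hmono q₂ hq₂ le_rfl) hb₂.le)
        have hY0 : (0:ℝ) ≤ b₁ * (2 ^ q₂ * |a| ^ (q₁ - 1)) + b₂ * (2 ^ q₂ * |a| ^ (q₂ - 1)) := by
          positivity
        calc |R (a + b) - R a|
            ≤ (b₁ * (|a| + |b|) ^ (q₁ - 1) + b₂ * (|a| + |b|) ^ (q₂ - 1)) * |b| := h1
          _ ≤ (b₁ * (2 ^ q₂ * |a| ^ (q₁ - 1)) + b₂ * (2 ^ q₂ * |a| ^ (q₂ - 1))) * (η * |a|) :=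
              mul_le_mul hXY hcase (abs_nonneg b) hY0
          _ = η * 2 ^ q₂ * (b₁ * (|a| ^ (q₁ - 1) * |a|) + b₂ * (|a| ^ (q₂ - 1) * |a|)) := by
              ring
          _ = η * 2 ^ q₂ * (b₁ * |a| ^ q₁ + b₂ * |a| ^ q₂) := by
              rw [BLaux_rpow_sub_one_mul (abs_nonneg a) (by linarith : (0:ℝ) < q₁),
                BLaux_rpow_sub_one_mul (abs_nonneg a) (by linarith : (0:ℝ) < q₂)]
      have h2 := hg b
      have htri : |R (a + b) - R a - R b| ≤ |R (a + b) - R a| + |R b| := by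
        have := abs_add_le (R (a + b) - R a) (-(R b))
        simpa [sub_eq_add_neg, abs_neg] using this
      have hεA : η * 2 ^ q₂ * (b₁ * |a| ^ q₁ + b₂ * |a| ^ q₂) ≤ ε * (|a| ^ q₁ + |a| ^ q₂) := by
        have e0 : (0:ℝ) ≤ η * 2 ^ q₂ := by positivity
        have e1 : η * 2 ^ q₂ * b₁ ≤ ε := by
          calc η * 2 ^ q₂ * b₁ ≤ η * 2 ^ q₂ * (b₁ + b₂) :=
                mul_le_mul_of_nonneg_left (by linarith) e0
            _ = η * (2 ^ q₂ * (b₁ + b₂)) := by ring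
            _ ≤ ε := hηD
        have e2 : η * 2 ^ q₂ * b₂ ≤ ε := by
          calc η * 2 ^ q₂ * b₂ ≤ η * 2 ^ q₂ * (b₁ + b₂) :=
                mul_le_mul_of_nonneg_left (by linarith) e0
            _ = η * (2 ^ q₂ * (b₁ + b₂)) := by ring
            _ ≤ ε := hηD
        nlinarith [mul_le_mul_of_nonneg_right e1 hA1, mul_le_mul_of_nonneg_right e2 hA2]
      have hKB : b₁ * |b| ^ q₁ + b₂ * |b| ^ q₂ ≤ K * (|b| ^ q₁ + |b| ^ q₂) := by
        have hb₁K : b₁ ≤ K := by rw [hKdef]; linarith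
        have hb₂K : b₂ ≤ K := by rw [hKdef]; linarith
        nlinarith [mul_le_mul_of_nonneg_right hb₁K hB1, mul_le_mul_of_nonneg_right hb₂K hB2]
      linarith
  · -- |b| large compared to |a|
    push_neg at hcase
    have hbpos : 0 < |b| := lt_of_le_of_lt (by positivity) hcase
    have haKb : |a| ≤ Kb * |b| := by
      have h1 : η * |a| ≤ |b| := hcase.le
      have h2 : |a| ≤ (1 / η) * |b| := by
        rw [div_mul_eq_mul_div, le_div_iff₀ hη0]; nlinarith
      calc |a| ≤ (1 / η) * |b| := h2
        _ ≤ Kb * |b| := mul_le_mul_of_nonneg_right hηinv (abs_nonneg b)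
    have habKb : |a + b| ≤ Kb * |b| := by
      have h1 : η * |a| ≤ |b| := hcase.le
      have h2 : |a| ≤ (1 / η) * |b| := by
        rw [div_mul_eq_mul_div, le_div_iff₀ hη0]; nlinarith
      calc |a + b| ≤ |a| + |b| := abs_add_le a b
        _ ≤ (1 / η) * |b| + 1 * |b| := by linarith [one_mul |b|]
        _ = (1 + 1 / η) * |b| := by ring
        _ ≤ Kb * |b| := mul_le_mul_of_nonneg_right hKbη (abs_nonneg b)
    have hbKb : |b| ≤ Kb * |b| := le_mul_of_one_le_left (abs_nonneg b) hKb1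
    have hRv : ∀ v : ℝ, |v| ≤ Kb * |b| →
        |R v| ≤ b₁ * Kb ^ q₁ * |b| ^ q₁ + b₂ * Kb ^ q₂ * |b| ^ q₂ := by
      intro v hv
      calc |R v| ≤ b₁ * |v| ^ q₁ + b₂ * |v| ^ q₂ := hg v
        _ ≤ b₁ * (Kb * |b|) ^ q₁ + b₂ * (Kb * |b|) ^ q₂ :=
            add_le_add
              (mul_le_mul_of_nonneg_left
                (Real.rpow_le_rpow (abs_nonneg v) hv (by linarith)) hb₁.le)
              (mul_le_mul_of_nonneg_left
                (Real.rpow_le_rpow (abs_nonneg v) hv (by linarith)) hb₂.le)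
        _ = b₁ * Kb ^ q₁ * |b| ^ q₁ + b₂ * Kb ^ q₂ * |b| ^ q₂ := by
            rw [Real.mul_rpow hKb0.le (abs_nonneg b), Real.mul_rpow hKb0.le (abs_nonneg b)]; ring
    have e1 := hRv _ habKb
    have e2 := hRv _ haKb
    have e3 := hRv _ hbKb
    have htri : |R (a + b) - R a - R b| ≤ |R (a + b)| + |R a| + |R b| := by
      have t1 := abs_add_le (R (a + b) - R a) (-(R b))
      have t2 := abs_add_le (R (a + b)) (-(R a))
      rw [abs_neg] at t1 t2
      have e : R (a + b) - R a - R b = R (a + b) - R a + -(R b) := by ring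
      have e' : R (a + b) - R a = R (a + b) + -(R a) := by ring
      rw [e, e'] at *
      calc |R (a + b) + -(R a) + -(R b)| ≤ |R (a + b) + -(R a)| + |R b| := t1
        _ ≤ |R (a + b)| + |R a| + |R b| := by linarith
    have hεA : (0:ℝ) ≤ ε * (|a| ^ q₁ + |a| ^ q₂) := by positivity
    have hKexp : 3 * (b₁ * Kb ^ q₁ * |b| ^ q₁ + b₂ * Kb ^ q₂ * |b| ^ q₂)
        ≤ K * (|b| ^ q₁ + |b| ^ q₂) := by
      rw [hKdef]
      nlinarith [mul_nonneg (mul_nonneg hb₁.le (by linarith : (0:ℝ) ≤ Kb ^ q₁)) hB2,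
        mul_nonneg (mul_nonneg hb₂.le (by linarith : (0:ℝ) ≤ Kb ^ q₂)) hB1,
        mul_nonneg hb₁.le hB1, mul_nonneg hb₂.le hB2, mul_nonneg hb₁.le hB2,
        mul_nonneg hb₂.le hB1]
    linarith

set_option maxHeartbeats 1000000 in
/-- Lemma 3.7 / `brezis-lieb`, Brezis–Lieb type splitting.
Let 1 < q₁ ≤ q₂ < ∞, R ∈ C¹(ℝ) with |R'(s)| ≤ b₁|s|^{q₁−1} + b₂|s|^{q₂−1}, and set
T̃(u) = ∫ R(u).  If {u_n} is bounded in L^{q₁}(ℝ^N) ∩ L^{q₂}(ℝ^N) and u_n → u a.e.,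
then T̃(u_n − u) + T̃(u) = T̃(u_n) + o(1). -/
theorem statement10
    (N : ℕ) (hN : 1 ≤ N)
    (q₁ q₂ : ℝ) (hq₁ : 1 < q₁) (hq₁₂ : q₁ ≤ q₂)
    (R : ℝ → ℝ) (hR : ContDiff ℝ 1 R)
    (b₁ b₂ : ℝ) (hb₁ : 0 < b₁) (hb₂ : 0 < b₂)
    (hR' : ∀ s : ℝ, |deriv R s| ≤ b₁ * |s| ^ (q₁ - 1) + b₂ * |s| ^ (q₂ - 1))
    (u : ℕ → EuclideanSpace ℝ (Fin N) → ℝ) (ulim : EuclideanSpace ℝ (Fin N) → ℝ)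
    (hmeas : ∀ n, AEStronglyMeasurable (u n)
      (volume : Measure (EuclideanSpace ℝ (Fin N))))
    -- boundedness in L^{q₁} ∩ L^{q₂}
    (hbdd : ∃ C : ℝ≥0∞, C ≠ ⊤ ∧ ∀ n,
      eLpNorm (u n) (ENNReal.ofReal q₁) volume ≤ C ∧
      eLpNorm (u n) (ENNReal.ofReal q₂) volume ≤ C)
    -- a.e. convergence
    (hae : ∀ᵐ x ∂(volume : Measure (EuclideanSpace ℝ (Fin N))),
      Tendsto (fun n => u n x) atTop (nhds (ulim x))) :
    Tendsto (fun n =>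
        (∫ x, R (u n x - ulim x)) + (∫ x, R (ulim x)) - ∫ x, R (u n x))
      atTop (nhds 0) := by
  classical
  obtain ⟨C, hCtop, hC⟩ := hbdd
  have hq₂ : 1 < q₂ := lt_of_lt_of_le hq₁ hq₁₂
  have hq₁0 : (0:ℝ) < q₁ := by linarith
  have hq₂0 : (0:ℝ) < q₂ := by linarith
  set μ : Measure (EuclideanSpace ℝ (Fin N)) := volume with hμdef
  set p₁ : ℝ≥0∞ := ENNReal.ofReal q₁ with hp₁def
  set p₂ : ℝ≥0∞ := ENNReal.ofReal q₂ with hp₂def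
  have hp₁0 : p₁ ≠ 0 := by
    rw [hp₁def]; simp only [ne_eq, ENNReal.ofReal_eq_zero, not_le]; linarith
  have hp₂0 : p₂ ≠ 0 := by
    rw [hp₂def]; simp only [ne_eq, ENNReal.ofReal_eq_zero, not_le]; linarith
  have hp₁t : p₁ ≠ ⊤ := ENNReal.ofReal_ne_top
  have hp₂t : p₂ ≠ ⊤ := ENNReal.ofReal_ne_top
  have hp₁r : p₁.toReal = q₁ := ENNReal.toReal_ofReal hq₁0.le
  have hp₂r : p₂.toReal = q₂ := ENNReal.toReal_ofReal hq₂0.le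
  have hp₁1 : 1 ≤ p₁ := by rw [hp₁def]; exact ENNReal.one_le_ofReal.mpr hq₁.le
  have hp₂1 : 1 ≤ p₂ := by rw [hp₂def]; exact ENNReal.one_le_ofReal.mpr hq₂.le
  have hClt : C < ⊤ := lt_top_iff_ne_top.mpr hCtop
  have hmeasl : AEStronglyMeasurable ulim μ := aestronglyMeasurable_of_tendsto_ae atTop hmeas hae
  -- the limit has eLpNorm ≤ C for both exponents
  have hulim_le : ∀ p : ℝ≥0∞, (∀ n, eLpNorm (u n) p μ ≤ C) → eLpNorm ulim p μ ≤ C := by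
    intro p hp
    refine le_trans (Lp.eLpNorm_lim_le_liminf_eLpNorm hmeas ulim hae) ?_
    refine le_trans liminf_le_limsup ?_
    exact limsup_le_of_le (h := Eventually.of_forall hp)
  have hulim1 : eLpNorm ulim p₁ μ ≤ C := hulim_le p₁ fun n => (hC n).1
  have hulim2 : eLpNorm ulim p₂ μ ≤ C := hulim_le p₂ fun n => (hC n).2
  have hmem1 : ∀ n, MemLp (u n) p₁ μ := fun n => ⟨hmeas n, lt_of_le_of_lt (hC n).1 hClt⟩
  have hmem2 : ∀ n, MemLp (u n) p₂ μ := fun n => ⟨hmeas n, lt_of_le_of_lt (hC n).2 hClt⟩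
  have hulimmem1 : MemLp ulim p₁ μ := ⟨hmeasl, lt_of_le_of_lt hulim1 hClt⟩
  have hulimmem2 : MemLp ulim p₂ μ := ⟨hmeasl, lt_of_le_of_lt hulim2 hClt⟩
  have hfm : ∀ n, AEStronglyMeasurable (fun x => u n x - ulim x) μ :=
    fun n => (hmeas n).sub hmeasl
  have hfeq : ∀ n, (fun x => u n x - ulim x) = u n - ulim := fun n => rfl
  have hfnorm : ∀ n, ∀ p : ℝ≥0∞, 1 ≤ p → eLpNorm (u n) p μ ≤ C → eLpNorm ulim p μ ≤ C →
      eLpNorm (fun x => u n x - ulim x) p μ ≤ 2 * C := by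
    intro n p hp h1 h2
    rw [hfeq n]
    calc eLpNorm (u n - ulim) p μ ≤ eLpNorm (u n) p μ + eLpNorm ulim p μ :=
          eLpNorm_sub_le (hmeas n) hmeasl hp
      _ ≤ C + C := add_le_add h1 h2
      _ = 2 * C := (two_mul C).symm
  have hfmem1 : ∀ n, MemLp (fun x => u n x - ulim x) p₁ μ := fun n => (hmem1 n).sub hulimmem1
  have hfmem2 : ∀ n, MemLp (fun x => u n x - ulim x) p₂ μ := fun n => (hmem2 n).sub hulimmem2
  -- integrability of |v|^q
  have hpow1 : ∀ v : EuclideanSpace ℝ (Fin N) → ℝ, MemLp v p₁ μ → Integrable (fun x => |v x| ^ q₁) μ := by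
    intro v hv
    have := hv.integrable_norm_rpow hp₁0 hp₁t
    simpa only [hp₁r, Real.norm_eq_abs] using this
  have hpow2 : ∀ v : EuclideanSpace ℝ (Fin N) → ℝ, MemLp v p₂ μ → Integrable (fun x => |v x| ^ q₂) μ := by
    intro v hv
    have := hv.integrable_norm_rpow hp₂0 hp₂t
    simpa only [hp₂r, Real.norm_eq_abs] using this
  have hRgrow : ∀ s : ℝ, |R s - R 0| ≤ b₁ * |s| ^ q₁ + b₂ * |s| ^ q₂ :=
    BLaux_growth hq₁ hq₁₂ hb₁.le hb₂.le hR hR'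
  -- integrability of R ∘ v - R 0
  have hintRsub : ∀ v : EuclideanSpace ℝ (Fin N) → ℝ, AEStronglyMeasurable v μ → MemLp v p₁ μ → MemLp v p₂ μ →
      Integrable (fun x => R (v x) - R 0) μ := by
    intro v hvm hv1 hv2
    refine Integrable.mono' (((hpow1 v hv1).const_mul b₁).add ((hpow2 v hv2).const_mul b₂)) ?_ ?_
    · exact (hR.continuous.comp_aestronglyMeasurable hvm).sub aestronglyMeasurable_const
    · filter_upwards with x
      simpa only [Real.norm_eq_abs, Pi.add_apply] using hRgrow (v x)
  by_cases hR0 : R 0 = 0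
  · -- main case
    have hRb : ∀ s : ℝ, |R s| ≤ b₁ * |s| ^ q₁ + b₂ * |s| ^ q₂ := by
      intro s; simpa [hR0] using hRgrow s
    have hintR : ∀ v : EuclideanSpace ℝ (Fin N) → ℝ, AEStronglyMeasurable v μ → MemLp v p₁ μ → MemLp v p₂ μ →
        Integrable (fun x => R (v x)) μ := by
      intro v hvm hv1 hv2
      simpa [hR0] using hintRsub v hvm hv1 hv2
    have hintRn : ∀ n, Integrable (fun x => R (u n x)) μ :=
      fun n => hintR (u n) (hmeas n) (hmem1 n) (hmem2 n)
    have hintRf : ∀ n, Integrable (fun x => R (u n x - ulim x)) μ :=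
      fun n => hintR _ (hfm n) (hfmem1 n) (hfmem2 n)
    have hintRl : Integrable (fun x => R (ulim x)) μ := hintR ulim hmeasl hulimmem1 hulimmem2
    -- φ n = |R(u n) - R(u n - ulim) - R(ulim)|
    have hφint : ∀ n, Integrable
        (fun x => |R (u n x) - R (u n x - ulim x) - R (ulim x)|) μ :=
      fun n => (((hintRn n).sub (hintRf n)).sub hintRl).abs
    have hrepr : ∀ n, (∫ x, R (u n x - ulim x) ∂μ) + (∫ x, R (ulim x) ∂μ) - ∫ x, R (u n x) ∂μ
        = ∫ x, (R (u n x - ulim x) + R (ulim x) - R (u n x)) ∂μ := by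
      intro n
      have hfg : Integrable (fun x => R (u n x - ulim x) + R (ulim x)) μ :=
        (hintRf n).add hintRl
      have hfgh : Integrable (fun x => R (u n x - ulim x) + R (ulim x) - R (u n x)) μ :=
        hfg.sub (hintRn n)
      rw [integral_sub hfg (hintRn n), integral_add (hintRf n) hintRl]
    have habs : ∀ n, |∫ x, (R (u n x - ulim x) + R (ulim x) - R (u n x)) ∂μ|
        ≤ ∫ x, |R (u n x) - R (u n x - ulim x) - R (ulim x)| ∂μ := by
      intro n
      have h := norm_integral_le_integral_norm (μ := μ)
        (fun x => R (u n x - ulim x) + R (ulim x) - R (u n x))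
      rw [Real.norm_eq_abs] at h
      refine le_trans h (le_of_eq (integral_congr_ae ?_))
      filter_upwards with x
      have he : R (u n x - ulim x) + R (ulim x) - R (u n x)
          = -(R (u n x) - R (u n x - ulim x) - R (ulim x)) := by ring
      rw [Real.norm_eq_abs, he, abs_neg]
    -- the key convergence
    have hφtend : Tendsto
        (fun n => ∫ x, |R (u n x) - R (u n x - ulim x) - R (ulim x)| ∂μ) atTop (𝓝 0) := by
      rw [Metric.tendsto_atTop]
      intro ε hε
      set M : ℝ := (2 * C).toReal ^ q₁ + (2 * C).toReal ^ q₂ + 1 with hMdef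
      have hM1 : 1 ≤ M := by
        have h1 : (0:ℝ) ≤ (2 * C).toReal ^ q₁ := Real.rpow_nonneg ENNReal.toReal_nonneg _
        have h2 : (0:ℝ) ≤ (2 * C).toReal ^ q₂ := Real.rpow_nonneg ENNReal.toReal_nonneg _
        rw [hMdef]; linarith
      have hM0 : (0:ℝ) < M := by linarith
      set ε' : ℝ := ε / (2 * M) with hε'def
      have hε'0 : 0 < ε' := by rw [hε'def]; positivity
      obtain ⟨K, hK0, hKest⟩ := BLaux_eps hq₁ hq₁₂ hb₁ hb₂ hR hR' hR0 hε'0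
      -- the dominating function
      have hGint : Integrable (fun x => K * (|ulim x| ^ q₁ + |ulim x| ^ q₂)) μ :=
        ((hpow1 ulim hulimmem1).add (hpow2 ulim hulimmem2)).const_mul K
      have hG0 : ∀ x : EuclideanSpace ℝ (Fin N), 0 ≤ K * (|ulim x| ^ q₁ + |ulim x| ^ q₂) := by
        intro x
        have := Real.rpow_nonneg (abs_nonneg (ulim x)) q₁
        have := Real.rpow_nonneg (abs_nonneg (ulim x)) q₂
        positivity
      -- the h and ψ functions
      have hhint : ∀ n, Integrable
          (fun x => |u n x - ulim x| ^ q₁ + |u n x - ulim x| ^ q₂) μ :=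
        fun n => (hpow1 _ (hfmem1 n)).add (hpow2 _ (hfmem2 n))
      have hψmeas : ∀ n, AEStronglyMeasurable (fun x =>
          max (|R (u n x) - R (u n x - ulim x) - R (ulim x)|
            - ε' * (|u n x - ulim x| ^ q₁ + |u n x - ulim x| ^ q₂)) 0) μ := by
        intro n
        have h1 := (hφint n).aestronglyMeasurable
        have h2 := (hhint n).aestronglyMeasurable
        exact ((h1.aemeasurable.sub (h2.aemeasurable.const_mul ε')).max
          aemeasurable_const).aestronglyMeasurable
      have hψ0 : ∀ n, ∀ x : EuclideanSpace ℝ (Fin N), 0 ≤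
          max (|R (u n x) - R (u n x - ulim x) - R (ulim x)|
            - ε' * (|u n x - ulim x| ^ q₁ + |u n x - ulim x| ^ q₂)) 0 :=
        fun n x => le_max_right _ _
      have hψG : ∀ n, ∀ x : EuclideanSpace ℝ (Fin N),
          max (|R (u n x) - R (u n x - ulim x) - R (ulim x)|
            - ε' * (|u n x - ulim x| ^ q₁ + |u n x - ulim x| ^ q₂)) 0
          ≤ K * (|ulim x| ^ q₁ + |ulim x| ^ q₂) := by
        intro n x
        refine max_le ?_ (hG0 x)
        have hk := hKest (u n x - ulim x) (ulim x)
        rw [sub_add_cancel] at hk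
        linarith
      have hψbound : ∀ n, ∀ᵐ x ∂μ, ‖max (|R (u n x) - R (u n x - ulim x) - R (ulim x)|
            - ε' * (|u n x - ulim x| ^ q₁ + |u n x - ulim x| ^ q₂)) 0‖
          ≤ K * (|ulim x| ^ q₁ + |ulim x| ^ q₂) := by
        intro n
        filter_upwards with x
        rw [Real.norm_eq_abs, abs_of_nonneg (hψ0 n x)]
        exact hψG n x
      have hψae : ∀ᵐ x ∂μ, Tendsto (fun n =>
          max (|R (u n x) - R (u n x - ulim x) - R (ulim x)|
            - ε' * (|u n x - ulim x| ^ q₁ + |u n x - ulim x| ^ q₂)) 0) atTop (𝓝 0) := by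
        filter_upwards [hae] with x hx
        have hfx : Tendsto (fun n => u n x - ulim x) atTop (𝓝 0) := by
          simpa using hx.sub (tendsto_const_nhds (x := ulim x))
        have hRux : Tendsto (fun n => R (u n x)) atTop (𝓝 (R (ulim x))) :=
          (hR.continuous.tendsto (ulim x)).comp hx
        have hRfx : Tendsto (fun n => R (u n x - ulim x)) atTop (𝓝 0) := by
          have := (hR.continuous.tendsto 0).comp hfx
          simpa [hR0, Function.comp_def] using this
        have hφx : Tendsto (fun n => |R (u n x) - R (u n x - ulim x) - R (ulim x)|)
            atTop (𝓝 0) := by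
          have h := (hRux.sub hRfx).sub (tendsto_const_nhds (x := R (ulim x)))
          have h' := h.abs
          simpa using h'
        have habsfx : Tendsto (fun n => |u n x - ulim x|) atTop (𝓝 0) := by
          simpa using hfx.abs
        have hq1x : Tendsto (fun n => |u n x - ulim x| ^ q₁) atTop (𝓝 0) := by
          have hc : ContinuousAt (fun t : ℝ => t ^ q₁) 0 :=
            Real.continuousAt_rpow_const 0 q₁ (Or.inr hq₁0.le)
          have := hc.tendsto.comp habsfx
          simpa [Real.zero_rpow hq₁0.ne', Function.comp_def] using this
        have hq2x : Tendsto (fun n => |u n x - ulim x| ^ q₂) atTop (𝓝 0) := by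
          have hc : ContinuousAt (fun t : ℝ => t ^ q₂) 0 :=
            Real.continuousAt_rpow_const 0 q₂ (Or.inr hq₂0.le)
          have := hc.tendsto.comp habsfx
          simpa [Real.zero_rpow hq₂0.ne', Function.comp_def] using this
        have hhx : Tendsto (fun n => |u n x - ulim x| ^ q₁ + |u n x - ulim x| ^ q₂)
            atTop (𝓝 0) := by
          simpa using hq1x.add hq2x
        have := (hφx.sub (hhx.const_mul ε')).max (tendsto_const_nhds (x := (0:ℝ)))
        simpa using this
      have hψtend : Tendsto (fun n => ∫ x,
          max (|R (u n x) - R (u n x - ulim x) - R (ulim x)|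
            - ε' * (|u n x - ulim x| ^ q₁ + |u n x - ulim x| ^ q₂)) 0 ∂μ) atTop (𝓝 0) := by
        have := tendsto_integral_of_dominated_convergence _ hψmeas hGint hψbound hψae
        simpa using this
      have hψint : ∀ n, Integrable (fun x =>
          max (|R (u n x) - R (u n x - ulim x) - R (ulim x)|
            - ε' * (|u n x - ulim x| ^ q₁ + |u n x - ulim x| ^ q₂)) 0) μ :=
        fun n => Integrable.mono' hGint (hψmeas n) (hψbound n)
      -- bound on ∫ h n
      have h2Ct : (2 * C) ≠ ⊤ := ENNReal.mul_ne_top (by norm_num) hCtop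
      have hkey : ∀ q : ℝ, 0 < q → ∀ v : EuclideanSpace ℝ (Fin N) → ℝ, AEStronglyMeasurable v μ →
          eLpNorm v (ENNReal.ofReal q) μ ≤ 2 * C →
          ∫ x, |v x| ^ q ∂μ ≤ (2 * C).toReal ^ q := by
        intro q hq v hvm hv
        have hq0' : ENNReal.ofReal q ≠ 0 := by
          simp only [ne_eq, ENNReal.ofReal_eq_zero, not_le]; linarith
        have hvm' : AEStronglyMeasurable (fun x => |v x| ^ q) μ :=
          (Real.continuous_rpow_const hq.le).comp_aestronglyMeasurable
            (continuous_abs.comp_aestronglyMeasurable hvm)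
        have heq : ∫ x, |v x| ^ q ∂μ = (∫⁻ x, (‖v x‖₊ : ℝ≥0∞) ^ q ∂μ).toReal := by
          rw [integral_eq_lintegral_of_nonneg_ae
            (Eventually.of_forall fun x => Real.rpow_nonneg (abs_nonneg _) _) hvm']
          congr 1
          apply lintegral_congr
          intro x
          rw [← enorm_eq_nnnorm, ← ofReal_norm_eq_enorm, Real.norm_eq_abs,
            ENNReal.ofReal_rpow_of_nonneg (abs_nonneg (v x)) hq.le]
        rw [heq]; simp_rw [← enorm_eq_nnnorm]; rw [lintegral_rpow_enorm_eq_rpow_eLpNorm' hq]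
        have heLp : eLpNorm' v q μ = eLpNorm v (ENNReal.ofReal q) μ := by
          rw [eLpNorm_eq_eLpNorm' hq0' ENNReal.ofReal_ne_top, ENNReal.toReal_ofReal hq.le]
        rw [heLp]
        calc ((eLpNorm v (ENNReal.ofReal q) μ) ^ q).toReal ≤ ((2 * C) ^ q).toReal :=
              ENNReal.toReal_mono (ENNReal.rpow_ne_top_of_nonneg hq.le h2Ct)
                (ENNReal.rpow_le_rpow hv hq.le)
          _ = (2 * C).toReal ^ q := (ENNReal.toReal_rpow _ _).symm
      have hhle : ∀ n, ∫ x, (|u n x - ulim x| ^ q₁ + |u n x - ulim x| ^ q₂) ∂μ ≤ M := by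
        intro n
        rw [integral_add (hpow1 _ (hfmem1 n)) (hpow2 _ (hfmem2 n))]
        have h1 := hkey q₁ hq₁0 _ (hfm n)
          (by rw [← hp₁def]; exact hfnorm n p₁ hp₁1 (hC n).1 hulim1)
        have h2 := hkey q₂ hq₂0 _ (hfm n)
          (by rw [← hp₂def]; exact hfnorm n p₂ hp₂1 (hC n).2 hulim2)
        rw [hMdef]; linarith
      -- pointwise φ ≤ ψ + ε' h
      have hφle : ∀ n, ∫ x, |R (u n x) - R (u n x - ulim x) - R (ulim x)| ∂μ
          ≤ (∫ x, max (|R (u n x) - R (u n x - ulim x) - R (ulim x)|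
            - ε' * (|u n x - ulim x| ^ q₁ + |u n x - ulim x| ^ q₂)) 0 ∂μ) + ε' * M := by
        intro n
        have hmono : ∫ x, |R (u n x) - R (u n x - ulim x) - R (ulim x)| ∂μ
            ≤ ∫ x, (max (|R (u n x) - R (u n x - ulim x) - R (ulim x)|
              - ε' * (|u n x - ulim x| ^ q₁ + |u n x - ulim x| ^ q₂)) 0
              + ε' * (|u n x - ulim x| ^ q₁ + |u n x - ulim x| ^ q₂)) ∂μ := by
          refine integral_mono (hφint n) ((hψint n).add ((hhint n).const_mul ε')) ?_
          intro x
          have := le_max_left (|R (u n x) - R (u n x - ulim x) - R (ulim x)|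
            - ε' * (|u n x - ulim x| ^ q₁ + |u n x - ulim x| ^ q₂)) 0
          dsimp only
          linarith
        have hεh : Integrable (fun x =>
            ε' * (|u n x - ulim x| ^ q₁ + |u n x - ulim x| ^ q₂)) μ :=
          (hhint n).const_mul ε'
        rw [integral_add (hψint n) hεh, integral_const_mul] at hmono
        have := mul_le_mul_of_nonneg_left (hhle n) hε'0.le
        linarith
      -- conclude
      have hε'M : ε' * M = ε / 2 := by
        rw [hε'def]; field_simp
      obtain ⟨N₀, hN₀⟩ := (Metric.tendsto_atTop.mp hψtend) (ε / 4) (by positivity)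
      refine ⟨N₀, fun n hn => ?_⟩
      have h1 := hN₀ n hn
      rw [Real.dist_eq, sub_zero] at h1 ⊢
      have hψle : ∫ x, max (|R (u n x) - R (u n x - ulim x) - R (ulim x)|
          - ε' * (|u n x - ulim x| ^ q₁ + |u n x - ulim x| ^ q₂)) 0 ∂μ < ε / 4 :=
        lt_of_abs_lt h1
      have hφnn : 0 ≤ ∫ x, |R (u n x) - R (u n x - ulim x) - R (ulim x)| ∂μ :=
        integral_nonneg fun x => abs_nonneg _
      rw [abs_of_nonneg hφnn]
      calc ∫ x, |R (u n x) - R (u n x - ulim x) - R (ulim x)| ∂μ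
          ≤ _ + ε' * M := hφle n
        _ < ε / 4 + ε / 2 := by linarith
        _ < ε := by linarith
    -- squeeze
    refine squeeze_zero_norm (fun n => ?_) hφtend
    rw [hμdef] at hrepr ⊢
    rw [Real.norm_eq_abs, hrepr n]
    exact habs n
  · -- degenerate case : R 0 ≠ 0, all integrals vanish
    haveI : Nonempty (Fin N) := ⟨⟨0, hN⟩⟩
    have huniv : μ Set.univ = ∞ := by
      rw [hμdef]
      exact measure_univ_of_isAddLeftInvariant volume
    have hnint : ∀ v : EuclideanSpace ℝ (Fin N) → ℝ, AEStronglyMeasurable v μ → MemLp v p₁ μ → MemLp v p₂ μ →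
        ¬ Integrable (fun x => R (v x)) μ := by
      intro v hvm hv1 hv2 hint
      have h2 : Integrable (fun x => R (v x) - (R (v x) - R 0)) μ :=
        hint.sub (hintRsub v hvm hv1 hv2)
      simp only [_root_.sub_sub_cancel] at h2
      rcases integrable_const_iff.mp h2 with h | h
      · exact hR0 h
      · exact (@measure_lt_top _ _ μ h Set.univ).ne huniv
    have hz1 : ∀ n, (∫ x, R (u n x - ulim x) ∂μ) = 0 :=
      fun n => integral_undef (hnint _ (hfm n) (hfmem1 n) (hfmem2 n))
    have hz2 : (∫ x, R (ulim x) ∂μ) = 0 :=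
      integral_undef (hnint ulim hmeasl hulimmem1 hulimmem2)
    have hz3 : ∀ n, (∫ x, R (u n x) ∂μ) = 0 :=
      fun n => integral_undef (hnint (u n) (hmeas n) (hmem1 n) (hmem2 n))
    have : (fun n => (∫ x, R (u n x - ulim x) ∂μ) + (∫ x, R (ulim x) ∂μ) - ∫ x, R (u n x) ∂μ)
        = fun _ => (0:ℝ) := by
      funext n
      rw [hz1 n, hz2, hz3 n]
      ring
    rw [hμdef] at this
    rw [this]
    exact tendsto_const_nhds
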